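/- Let n ≥ 4, let V be an n-dimensional real vector space with a nondegenerate symmetric bilinear form h, let 𝒮 be an h-self-adjoint endomorphism, S(X,Y) = h(X,𝒮Y), R* = (1/2) S∧S. If R* = (φ/2)·Ric(R*)∧Ric(R*) + μ·h∧Ric(R*) + (η/2)·h∧h for some real numbers φ ≠ 0, μ, η, then R*·R* = ((n−2)(μ² − φη) − μ)·φ⁻¹·Q(h, R*). -/

import Mathlib

namespace OVAff

variable {V : Type*} [AddCommGroup V] [Module ℝ V]

/-- Kulkarni–Nomizu product of two (0,2)-tensors. -/
noncomputable def KN (E F : V → V → ℝ) : V → V → V → V → ℝ := fun X₁ X₂ X₃ X₄ =>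
  E X₁ X₄ * F X₂ X₃ + E X₂ X₃ * F X₁ X₄ - E X₁ X₃ * F X₂ X₄ - E X₂ X₄ * F X₁ X₃

/-- Kulkarni–Nomizu product of a (0,2)-tensor with a (0,4)-tensor. -/
noncomputable def KN4 (E : V → V → ℝ) (T : V → V → V → V → ℝ) :
    V → V → V → V → V → V → ℝ := fun X₁ X₂ X₃ X₄ Y₁ Y₂ =>
  E X₁ X₄ * T X₂ X₃ Y₁ Y₂ + E X₂ X₃ * T X₁ X₄ Y₁ Y₂
    - E X₁ X₃ * T X₂ X₄ Y₁ Y₂ - E X₂ X₄ * T X₁ X₃ Y₁ Y₂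

/-- (X ∧_A Y) Z = A(Y,Z) X − A(X,Z) Y. -/
noncomputable def wedgeVec (A : V → V → ℝ) (X Y Z : V) : V := A Y Z • X - A X Z • Y

/-- Tachibana operator Q(A,T) on a (0,2)-tensor T. -/
noncomputable def Q2 (A T : V → V → ℝ) : V → V → V → V → ℝ :=
  fun X₁ X₂ X Y => -(T (wedgeVec A X Y X₁) X₂ + T X₁ (wedgeVec A X Y X₂))

/-- Tachibana operator Q(A,T) on a (0,4)-tensor T. -/
noncomputable def Q4 (A : V → V → ℝ) (T : V → V → V → V → ℝ) :
    V → V → V → V → V → V → ℝ := fun X₁ X₂ X₃ X₄ X Y =>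
  -(T (wedgeVec A X Y X₁) X₂ X₃ X₄ + T X₁ (wedgeVec A X Y X₂) X₃ X₄
    + T X₁ X₂ (wedgeVec A X Y X₃) X₄ + T X₁ X₂ X₃ (wedgeVec A X Y X₄))

/-- The derivation B·T of a curvature operator family ℬ (with h(ℬ(X,Y)Z,W)=B(X,Y,Z,W))
acting on a (0,2)-tensor T. -/
noncomputable def dot2 (ℬ : V → V → V → V) (T : V → V → ℝ) : V → V → V → V → ℝ :=
  fun X₁ X₂ X Y => -(T (ℬ X Y X₁) X₂ + T X₁ (ℬ X Y X₂))

/-- The derivation B·T acting on a (0,4)-tensor T. -/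
noncomputable def dot4 (ℬ : V → V → V → V) (T : V → V → V → V → ℝ) :
    V → V → V → V → V → V → ℝ := fun X₁ X₂ X₃ X₄ X Y =>
  -(T (ℬ X Y X₁) X₂ X₃ X₄ + T X₁ (ℬ X Y X₂) X₃ X₄
    + T X₁ X₂ (ℬ X Y X₃) X₄ + T X₁ X₂ X₃ (ℬ X Y X₄))

/-- Ricci contraction of a (0,4)-tensor with respect to an h-orthonormal basis `e`
with signs `ε`. -/
noncomputable def ricci {n : ℕ} (ε : Fin n → ℝ) (e : Fin n → V)
    (B : V → V → V → V → ℝ) : V → V → ℝ :=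
  fun X Y => ∑ j, ε j * B (e j) X Y (e j)

/-- Scalar curvature of a (0,4)-tensor. -/
noncomputable def scal {n : ℕ} (ε : Fin n → ℝ) (e : Fin n → V)
    (B : V → V → V → V → ℝ) : ℝ :=
  ∑ j, ε j * ricci ε e B (e j) (e j)

/-- Weyl tensor of a (0,4)-tensor with respect to the metric h. -/
noncomputable def weyl {n : ℕ} (h : V → V → ℝ) (ε : Fin n → ℝ) (e : Fin n → V)
    (B : V → V → V → V → ℝ) : V → V → V → V → ℝ := fun X₁ X₂ X₃ X₄ =>
  B X₁ X₂ X₃ X₄ - (1 / ((n : ℝ) - 2)) * KN h (ricci ε e B) X₁ X₂ X₃ X₄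
    + (scal ε e B / (2 * ((n : ℝ) - 2) * ((n : ℝ) - 1))) * KN h h X₁ X₂ X₃ X₄


set_option maxHeartbeats 4000000 in
/-- a Roter-type expression for R* implies R*·R* = ((n−2)(μ²−φη)−μ)φ⁻¹·Q(h,R*). -/
theorem statement5
    {V : Type*} [AddCommGroup V] [Module ℝ V]
    (n : ℕ) (hn : 4 ≤ n)
    (h : LinearMap.BilinForm ℝ V)
    (hsymm : ∀ X Y, h X Y = h Y X)
    (hnd : ∀ X : V, (∀ Y, h X Y = 0) → X = 0)
    (e : Module.Basis (Fin n) ℝ V) (ε : Fin n → ℝ)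
    (hε : ∀ j, ε j = 1 ∨ ε j = -1)
    (he : ∀ j k, h (e j) (e k) = if j = k then ε j else 0)
    (𝒮 : V →ₗ[ℝ] V) (hsa : ∀ X Y, h (𝒮 X) Y = h X (𝒮 Y))
    (S : V → V → ℝ) (hS : S = fun X Y => h X (𝒮 Y))
    (Rstar : V → V → V → V → ℝ)
    (hRstar : Rstar = fun X₁ X₂ X₃ X₄ => (1 / 2 : ℝ) * KN S S X₁ X₂ X₃ X₄)
    (ℬ : V → V → V → V)
    (hℬ : ∀ X Y Z W, h (ℬ X Y Z) W = Rstar X Y Z W)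
    (Ric : V → V → ℝ) (hRic : Ric = ricci ε (⇑e) Rstar)
    (φ μ η : ℝ) (hφ : φ ≠ 0)
    (hRoter : ∀ X₁ X₂ X₃ X₄, Rstar X₁ X₂ X₃ X₄
      = (φ / 2) * KN Ric Ric X₁ X₂ X₃ X₄
        + μ * KN (fun X Y => h X Y) Ric X₁ X₂ X₃ X₄
        + (η / 2) * KN (fun X Y => h X Y) (fun X Y => h X Y) X₁ X₂ X₃ X₄) :
    ∀ X₁ X₂ X₃ X₄ X Y,
      dot4 ℬ Rstar X₁ X₂ X₃ X₄ X Y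
        = (((n : ℝ) - 2) * (μ ^ 2 - φ * η) - μ) * φ⁻¹
          * Q4 (fun X Y => h X Y) Rstar X₁ X₂ X₃ X₄ X Y := by

  classical
  -- symmetry of S
  have hSsymm : ∀ X Y : V, S X Y = S Y X := by
    intro X Y; rw [hS]; simp only; rw [← hsa, hsymm]
  -- h W (e j) in terms of coordinates
  have hrepr : ∀ (W : V) (j : Fin n), h W (e j) = ε j * e.repr W j := by
    intro W j
    conv_lhs => rw [← e.sum_repr W]
    rw [map_sum, LinearMap.sum_apply]
    rw [Finset.sum_eq_single j]
    · simp [he, mul_comm]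
    · intro k _ hk
      simp [he, hk]
    · simp
  have hε2 : ∀ j, ε j * ε j = 1 := by
    intro j; rcases hε j with h1 | h1 <;> rw [h1] <;> norm_num
  -- expansion lemma
  have hexp : ∀ Z W : V, (∑ j, ε j * (h Z (e j) * h W (e j))) = h Z W := by
    intro Z W
    have step : ∀ j ∈ Finset.univ, ε j * (h Z (e j) * h W (e j))
        = e.repr W j * h Z (e j) := by
      intro j _
      rw [hrepr W j]
      calc ε j * (h Z (e j) * (ε j * e.repr W j))
          = (ε j * ε j) * (e.repr W j * h Z (e j)) := by ring
        _ = e.repr W j * h Z (e j) := by rw [hε2 j, one_mul]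
    rw [Finset.sum_congr rfl step]
    conv_rhs => rw [← e.sum_repr W, map_sum]
    simp
  -- the Ricci operator PP = τ•𝒮 - 𝒮∘𝒮
  set τ : ℝ := ∑ j, ε j * S (e j) (e j) with hτ
  set PP : V →ₗ[ℝ] V := τ • 𝒮 - 𝒮 ∘ₗ 𝒮 with hPP
  have hPapp : ∀ Z : V, PP Z = τ • 𝒮 Z - 𝒮 (𝒮 Z) := by
    intro Z; rw [hPP]; simp
  -- self-adjointness of PP
  have hPsa : ∀ a b : V, h (PP a) b = h a (PP b) := by
    intro a b
    rw [hPapp, hPapp]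
    simp only [map_sub, map_smul, LinearMap.sub_apply, LinearMap.smul_apply, smul_eq_mul]
    rw [hsa, hsa, hsa]
  have hPsymm : ∀ a b : V, h a (PP b) = h b (PP a) := by
    intro a b; rw [← hPsa, hsymm]
  -- Ric in terms of PP
  have hRicdef : ∀ X Y : V, Ric X Y = ∑ j, ε j * Rstar (e j) X Y (e j) := by
    intro X Y; rw [hRic]; rfl
  have hRicP : ∀ X Y : V, Ric X Y = h X (PP Y) := by
    intro X Y
    rw [hRicdef]
    have step : ∀ j ∈ Finset.univ, ε j * Rstar (e j) X Y (e j)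
        = (ε j * S (e j) (e j)) * S X Y - ε j * (h (𝒮 X) (e j) * h (𝒮 Y) (e j)) := by
      intro j _
      rw [hRstar]
      simp only [KN]
      have f1 : h (e j) (𝒮 Y) = h (𝒮 Y) (e j) := hsymm _ _
      have f2 : h X (𝒮 (e j)) = h (𝒮 X) (e j) := (hsa _ _).symm
      have f3 : h Y (𝒮 (e j)) = h (𝒮 Y) (e j) := (hsa _ _).symm
      simp only [hS, f1, f2, f3]
      ring
    rw [Finset.sum_congr rfl step, Finset.sum_sub_distrib, ← Finset.sum_mul, hexp]
    rw [hPapp]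
    simp only [map_sub, map_smul, smul_eq_mul]
    rw [hsa, hτ]
    simp only [hS]
  -- κ
  set κ : ℝ := ∑ j, ε j * Ric (e j) (e j) with hκ
  -- sum of h (e j) (e j) weighted
  have hnsum : (∑ j, ε j * h (e j) (e j)) = (n : ℝ) := by
    have step : ∀ j ∈ Finset.univ, ε j * h (e j) (e j) = 1 := by
      intro j _
      rw [he j j, if_pos rfl]
      exact hε2 j
    rw [Finset.sum_congr rfl step]
    simp
  -- the key quadratic relation
  have hkey : ∀ a b : V, h a (PP (PP b))
      = φ⁻¹ * ((φ * κ + μ * ((n:ℝ) - 2) - 1) * h a (PP b)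
        + (μ * κ + η * ((n:ℝ) - 1)) * h a b) := by
    intro X Y
    have h1 : Ric X Y = φ * (κ * Ric X Y - h (PP X) (PP Y))
        + μ * ((n:ℝ) * Ric X Y + κ * h X Y - h Y (PP X) - h X (PP Y))
        + η * ((n:ℝ) * h X Y - h X Y) := by
      conv_lhs => rw [hRicdef]
      have step : ∀ j ∈ Finset.univ, ε j * Rstar (e j) X Y (e j)
          = φ * (Ric X Y * (ε j * Ric (e j) (e j)) - ε j * (h (PP X) (e j) * h (PP Y) (e j)))
            + μ * (Ric X Y * (ε j * h (e j) (e j)) + h X Y * (ε j * Ric (e j) (e j))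
              - ε j * (h Y (e j) * h (PP X) (e j)) - ε j * (h X (e j) * h (PP Y) (e j)))
            + η * (h X Y * (ε j * h (e j) (e j)) - ε j * (h X (e j) * h Y (e j))) := by
        intro j _
        rw [hRoter]
        have g1 : Ric (e j) Y = h (PP Y) (e j) := by rw [hRicP, hsymm]
        have g2 : Ric X (e j) = h (PP X) (e j) := by rw [hRicP, ← hPsa]
        have g3 : Ric Y (e j) = h (PP Y) (e j) := by rw [hRicP, ← hPsa]
        have g4 : h (e j) Y = h Y (e j) := hsymm _ _
        have g5 : Ric X Y = Ric X Y := rfl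
        simp only [KN, g1, g2, g3, g4]
        ring
      rw [Finset.sum_congr rfl step]
      simp only [Finset.sum_add_distrib, Finset.sum_sub_distrib, ← Finset.mul_sum,
        ← Finset.sum_mul]
      rw [hexp, hexp, hexp, hexp, hnsum, ← hκ]
      ring
    rw [hRicP, hPsa, hPsymm Y X] at h1
    rw [inv_mul_eq_div, eq_div_iff hφ]
    linear_combination h1
  -- explicit form of the curvature operator
  have hBform : ∀ A B Z : V, ℬ A B Z
      = ((φ * Ric B Z + μ * h B Z) • PP A - (φ * Ric A Z + μ * h A Z) • PP B)
        + ((μ * Ric B Z + η * h B Z) • A - (μ * Ric A Z + η * h A Z) • B) := by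
    intro A B Z
    have hall : ∀ W, h (ℬ A B Z
        - (((φ * Ric B Z + μ * h B Z) • PP A - (φ * Ric A Z + μ * h A Z) • PP B)
          + ((μ * Ric B Z + η * h B Z) • A - (μ * Ric A Z + η * h A Z) • B))) W = 0 := by
      intro W
      rw [map_sub, LinearMap.sub_apply, hℬ, hRoter, sub_eq_zero]
      simp only [map_add, map_sub, map_smul, LinearMap.add_apply, LinearMap.sub_apply,
        LinearMap.smul_apply, smul_eq_mul, KN]
      simp only [hRicP, hPsa]
      ring
    exact sub_eq_zero.mp (hnd _ hall)
  -- the final computation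
  intro X₁ X₂ X₃ X₄ X Y
  simp only [dot4, Q4, wedgeVec, hBform, hRoter, KN]
  simp only [hRicP]
  simp only [map_add, map_sub, map_smul, LinearMap.add_apply, LinearMap.sub_apply,
    LinearMap.smul_apply, smul_eq_mul]
  simp only [hPsa]
  simp only [hkey]
  have g10 : h X₂ X₁ = h X₁ X₂ := hsymm _ _
  have r10 : h X₂ (PP X₁) = h X₁ (PP X₂) := hPsymm _ _
  have g20 : h X₃ X₁ = h X₁ X₃ := hsymm _ _
  have r20 : h X₃ (PP X₁) = h X₁ (PP X₃) := hPsymm _ _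
  have g21 : h X₃ X₂ = h X₂ X₃ := hsymm _ _
  have r21 : h X₃ (PP X₂) = h X₂ (PP X₃) := hPsymm _ _
  have g30 : h X₄ X₁ = h X₁ X₄ := hsymm _ _
  have r30 : h X₄ (PP X₁) = h X₁ (PP X₄) := hPsymm _ _
  have g31 : h X₄ X₂ = h X₂ X₄ := hsymm _ _
  have r31 : h X₄ (PP X₂) = h X₂ (PP X₄) := hPsymm _ _
  have g32 : h X₄ X₃ = h X₃ X₄ := hsymm _ _
  have r32 : h X₄ (PP X₃) = h X₃ (PP X₄) := hPsymm _ _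
  have g40 : h X X₁ = h X₁ X := hsymm _ _
  have r40 : h X (PP X₁) = h X₁ (PP X) := hPsymm _ _
  have g41 : h X X₂ = h X₂ X := hsymm _ _
  have r41 : h X (PP X₂) = h X₂ (PP X) := hPsymm _ _
  have g42 : h X X₃ = h X₃ X := hsymm _ _
  have r42 : h X (PP X₃) = h X₃ (PP X) := hPsymm _ _
  have g43 : h X X₄ = h X₄ X := hsymm _ _
  have r43 : h X (PP X₄) = h X₄ (PP X) := hPsymm _ _
  have g50 : h Y X₁ = h X₁ Y := hsymm _ _
  have r50 : h Y (PP X₁) = h X₁ (PP Y) := hPsymm _ _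
  have g51 : h Y X₂ = h X₂ Y := hsymm _ _
  have r51 : h Y (PP X₂) = h X₂ (PP Y) := hPsymm _ _
  have g52 : h Y X₃ = h X₃ Y := hsymm _ _
  have r52 : h Y (PP X₃) = h X₃ (PP Y) := hPsymm _ _
  have g53 : h Y X₄ = h X₄ Y := hsymm _ _
  have r53 : h Y (PP X₄) = h X₄ (PP Y) := hPsymm _ _
  have g54 : h Y X = h X Y := hsymm _ _
  have r54 : h Y (PP X) = h X (PP Y) := hPsymm _ _
  simp only [g10, r10, g20, r20, g21, r21, g30, r30, g31, r31, g32, r32, g40, r40, g41, r41, g42, r42, g43, r43, g50, r50, g51, r51, g52, r52, g53, r53, g54, r54]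
  field_simp
  ring

end OVAff
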